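/- Let P : ℝ → ℝ be continuously differentiable with x·P'(x) ≤ 0 for all x ∈ ℝ. Let λ ∈ ℝ and let φ : ℝ → ℝ be twice continuously differentiable with φ''(x) = (P(x) − λ)·φ(x) for all x ∈ ℝ. Assume φ ∈ L²(ℝ), φ' ∈ L²(ℝ); the functions x ↦ (P(x)−λ)·φ(x)² and x ↦ x·P'(x)·φ(x)² are integrable on ℝ; and φ(x)·φ'(x) → 0, x·(φ'(x))² → 0, x·(P(x)−λ)·φ(x)² → 0 as x → ±∞. Then φ is identically zero. In other words, under the sign condition x·P'(x) ≤ 0 the Schrödinger operator −∂_x² + P has no nonzero eigenfunction (with the stated decay) for any real eigenvalue λ. -/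

import Mathlib

open MeasureTheory Filter

/-- Under the repulsivity (sign) condition `x·P'(x) ≤ 0`, the Schrödinger operator
`−∂_x² + P` has no nonzero eigenfunction (with the stated decay) for any real
eigenvalue `λ`: the virial identity `2∫(φ')² = ∫ x P' φ²` forces `φ ≡ 0`. -/
theorem no_internal_modes
    (P : ℝ → ℝ) (hP : ContDiff ℝ 1 P) (hsign : ∀ x : ℝ, x * deriv P x ≤ 0)
    (lam : ℝ)
    (φ : ℝ → ℝ) (hφ : ContDiff ℝ 2 φ)
    (heq : ∀ x : ℝ, deriv (deriv φ) x = (P x - lam) * φ x)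
    (hφL2 : MemLp φ 2) (hφ'L2 : MemLp (deriv φ) 2)
    (hint1 : Integrable (fun x : ℝ => (P x - lam) * φ x ^ 2))
    (hint2 : Integrable (fun x : ℝ => x * deriv P x * φ x ^ 2))
    (hb1t : Tendsto (fun x : ℝ => φ x * deriv φ x) atTop (nhds 0))
    (hb1b : Tendsto (fun x : ℝ => φ x * deriv φ x) atBot (nhds 0))
    (hb2t : Tendsto (fun x : ℝ => x * (deriv φ x) ^ 2) atTop (nhds 0))
    (hb2b : Tendsto (fun x : ℝ => x * (deriv φ x) ^ 2) atBot (nhds 0))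
    (hb3t : Tendsto (fun x : ℝ => x * (P x - lam) * φ x ^ 2) atTop (nhds 0))
    (hb3b : Tendsto (fun x : ℝ => x * (P x - lam) * φ x ^ 2) atBot (nhds 0)) :
    ∀ x : ℝ, φ x = 0 := by
  -- differentiability facts
  have hφd : Differentiable ℝ φ := hφ.differentiable (by norm_num)
  have hψc : ContDiff ℝ 1 (deriv φ) := by
    have := (contDiff_succ_iff_deriv (n := 1)).mp (by norm_num at hφ ⊢; exact hφ)
    exact this.2.2
  have hψd : Differentiable ℝ (deriv φ) := hψc.differentiable (by norm_num)
  have hPd : Differentiable ℝ P := hP.differentiable (by norm_num)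
  -- the virial function
  set F : ℝ → ℝ := fun x =>
    x * (deriv φ x) ^ 2 - x * (P x - lam) * φ x ^ 2 + φ x * deriv φ x with hF
  have hder : ∀ x : ℝ, HasDerivAt F
      (2 * (deriv φ x) ^ 2 - x * deriv P x * φ x ^ 2) x := by
    intro x
    have h1 : HasDerivAt φ (deriv φ x) x := hφd.differentiableAt.hasDerivAt
    have h2 : HasDerivAt (deriv φ) ((P x - lam) * φ x) x := by
      have := hψd.differentiableAt.hasDerivAt (x := x)
      rwa [heq x] at this
    have h3 : HasDerivAt P (deriv P x) x := hPd.differentiableAt.hasDerivAt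
    have h4 : HasDerivAt id (1 : ℝ) x := hasDerivAt_id x
    have := (((h4.mul (h2.pow 2)).sub
        ((h4.mul ((h3.sub_const lam).mul (h1.pow 2)))) ).add (h1.mul h2))
    convert this using 1
    case e'_8 => rw [hF]; funext y; simp only [id_eq, Pi.mul_apply, Pi.sub_apply, Pi.add_apply, Pi.pow_apply]; ring
    case e'_9 => simp only [id_eq, Pi.pow_apply, Pi.mul_apply, Nat.cast_ofNat, Nat.reduceSub, pow_one]; ring
    all_goals rfl
  have hFd : Differentiable ℝ F := fun x => (hder x).differentiableAt
  have hderiv : ∀ x, deriv F x = 2 * (deriv φ x) ^ 2 - x * deriv P x * φ x ^ 2 :=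
    fun x => (hder x).deriv
  have hmono : Monotone F := by
    apply monotone_of_deriv_nonneg hFd
    intro x
    rw [hderiv x]
    nlinarith [hsign x, sq_nonneg (deriv φ x)]
  have hFt : Tendsto F atTop (nhds 0) := by
    have := (hb2t.sub hb3t).add hb1t
    simpa using this
  have hFb : Tendsto F atBot (nhds 0) := by
    have := (hb2b.sub hb3b).add hb1b
    simpa using this
  have hF0 : ∀ x, F x = 0 := fun x =>
    le_antisymm (hmono.ge_of_tendsto hFt x) (hmono.le_of_tendsto hFb x)
  have hψ0 : ∀ x, deriv φ x = 0 := by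
    intro x
    have h5 : HasDerivAt F (0 : ℝ) x := by
      have : F = fun _ => (0 : ℝ) := funext hF0
      rw [this]
      exact hasDerivAt_const x 0
    have := h5.unique (hder x)
    nlinarith [hsign x, sq_nonneg (deriv φ x)]
  have hconst : ∀ x, φ x = φ 0 := fun x => is_const_of_deriv_eq_zero hφd hψ0 x 0
  -- constant L² function on ℝ is zero
  have hc0 : φ 0 = 0 := by
    by_contra hc
    have hφeq : φ = fun _ => φ 0 := funext hconst
    have := hφL2.2
    rw [hφeq, eLpNorm_const (φ 0) (by norm_num) (Measure.measure_univ_ne_zero.mp (by simp))] at this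
    simp [Real.volume_univ, ENNReal.top_rpow_of_pos, hc] at this
  intro x
  rw [hconst x, hc0]
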